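/- Suppose a system satisfies, for each M > 0, an estimate |x(t,ξ,u)| ≤ β_M(|ξ|,t) + γ_M(‖u‖_∞) for all ξ and all inputs with ‖u‖_∞ ≤ M, where β_M ∈ KL, γ_M ∈ K∞. Let σ ∈ K satisfy γ_M(r) ≤ σ(M)σ(r) for all r ≥ 0 and integers M ≥ 1, and define γ(r) := σ(r+1)σ(r). Then γ ∈ K∞ and every trajectory satisfies the asymptotic gain property liminf_{t→∞} |x(t,ξ,u)| ≤ γ(‖u‖_∞). -/

import Mathlib

/-- A function of class `K`: continuous, strictly increasing on `[0,∞)`, zero at zero. -/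
def ClassK (f : ℝ → ℝ) : Prop :=
  ContinuousOn f (Set.Ici 0) ∧ StrictMonoOn f (Set.Ici 0) ∧ f 0 = 0

/-- A function of class `K∞`: class `K` and unbounded. -/
def ClassKInf (f : ℝ → ℝ) : Prop :=
  ClassK f ∧ Filter.Tendsto f Filter.atTop Filter.atTop

/-- A function of class `KL`. -/
def ClassKL (β : ℝ → ℝ → ℝ) : Prop :=
  (∀ t, 0 ≤ t → ClassK (fun r => β r t)) ∧
  (∀ r, 0 ≤ r → AntitoneOn (fun t => β r t) (Set.Ici 0) ∧
    Filter.Tendsto (fun t => β r t) Filter.atTop (nhds 0))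

/-- If a system is semiglobally ISS with respect to inputs, with families β_M ∈ KL and
γ_M ∈ K∞, and σ ∈ K satisfies γ_M(r) ≤ σ(M)σ(r) for integers M ≥ 1, then
γ(r) := σ(r+1)σ(r) is of class K∞ and every trajectory satisfies the asymptotic gain
property liminf_{t→∞} |x(t,ξ,u)| ≤ γ(‖u‖_∞). -/
theorem stmt19 {E F : Type*} [NormedAddCommGroup E] [NormedAddCommGroup F]
    (X : E → (ℝ → F) → ℝ → E)
    (βf : ℝ → ℝ → ℝ → ℝ) (γf : ℝ → ℝ → ℝ) (σ : ℝ → ℝ)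
    (hfam : ∀ M : ℝ, 0 < M → ClassKL (βf M) ∧ ClassKInf (γf M))
    (hest : ∀ M : ℝ, 0 < M → ∀ (ξ : E) (u : ℝ → F) (C : ℝ), 0 ≤ C → C ≤ M →
      (∀ s, 0 ≤ s → ‖u s‖ ≤ C) → ∀ t, 0 ≤ t → ‖X ξ u t‖ ≤ βf M ‖ξ‖ t + γf M C)
    (hσ : ClassK σ)
    (hσγ : ∀ M : ℕ, 1 ≤ M → ∀ r : ℝ, 0 ≤ r → γf (M : ℝ) r ≤ σ (M : ℝ) * σ r) :
    ClassKInf (fun r => σ (r + 1) * σ r) ∧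
    ∀ (ξ : E) (u : ℝ → F) (C : ℝ), 0 ≤ C → (∀ s, 0 ≤ s → ‖u s‖ ≤ C) →
      Filter.liminf (fun t => ‖X ξ u t‖) Filter.atTop ≤ σ (C + 1) * σ C := by
  obtain ⟨hσc, hσm, hσ0⟩ := hσ
  have hσnn : ∀ r : ℝ, 0 ≤ r → 0 ≤ σ r := fun r hr => by
    rcases eq_or_lt_of_le hr with h | h
    · simp [← h, hσ0]
    · exact le_of_lt (hσ0 ▸ hσm Set.self_mem_Ici (Set.mem_Ici.mpr hr) h)
  have hσ1 : 0 < σ 1 := hσ0 ▸ hσm Set.self_mem_Ici (Set.mem_Ici.mpr zero_le_one) one_pos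
  -- σ tends to atTop
  have hσtop : Filter.Tendsto σ Filter.atTop Filter.atTop := by
    have hγ1 : Filter.Tendsto (γf 1) Filter.atTop Filter.atTop := (hfam 1 one_pos).2.2
    have h1 : Filter.Tendsto (fun r => (σ 1)⁻¹ * γf 1 r) Filter.atTop Filter.atTop :=
      hγ1.const_mul_atTop (inv_pos.mpr hσ1)
    refine Filter.tendsto_atTop_mono' _ ?_ h1
    filter_upwards [Filter.eventually_ge_atTop (0:ℝ)] with r hr
    have := hσγ 1 le_rfl r hr
    rw [Nat.cast_one] at this
    rw [inv_mul_le_iff₀ hσ1] at *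
    linarith [this]
  have hKinf : ClassKInf (fun r => σ (r + 1) * σ r) := by
    refine ⟨⟨?_, ?_, ?_⟩, ?_⟩
    · exact (hσc.comp (continuousOn_id.add continuousOn_const)
        (fun x hx => by simp at hx ⊢; linarith)).mul hσc
    · intro a ha b hb hab
      have h1 : σ (a + 1) ≤ σ (b + 1) :=
        (hσm.monotoneOn) (by simp at ha ⊢; linarith) (by simp at hb ⊢; linarith)
          (by linarith)
      have h2 : σ a < σ b := hσm ha hb hab
      have h3 : 0 < σ (b + 1) := hσ0 ▸ hσm Set.self_mem_Ici
        (Set.mem_Ici.mpr (by simp at hb; linarith)) (by simp at hb; linarith)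
      exact mul_lt_mul' h1 h2 (hσnn a ha) h3
    · simp [hσ0]
    · have h1 : Filter.Tendsto (fun r : ℝ => σ (r + 1)) Filter.atTop Filter.atTop :=
        hσtop.comp (Filter.tendsto_atTop_add_const_right _ 1 Filter.tendsto_id)
      exact h1.atTop_mul_atTop₀ hσtop
  refine ⟨hKinf, fun ξ u C hC hu => ?_⟩
  set M : ℕ := max 1 ⌈C⌉₊ with hM
  have hM1 : (1:ℕ) ≤ M := le_max_left _ _
  have hMpos : (0:ℝ) < (M:ℝ) := by exact_mod_cast Nat.lt_of_lt_of_le Nat.zero_lt_one hM1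
  have hCM : C ≤ (M:ℝ) := le_trans (Nat.le_ceil C) (by exact_mod_cast le_max_right 1 ⌈C⌉₊)
  have hMC1 : (M:ℝ) ≤ C + 1 := by
    rcases max_cases 1 ⌈C⌉₊ with ⟨h, _⟩ | ⟨h, _⟩
    · rw [hM, h]; push_cast; linarith
    · rw [hM, h]; exact le_of_lt (Nat.ceil_lt_add_one hC)
  have hbnd : ∀ t, 0 ≤ t → ‖X ξ u t‖ ≤ βf (M:ℝ) ‖ξ‖ t + γf (M:ℝ) C :=
    hest (M:ℝ) hMpos ξ u C hC hCM hu
  have hβ0 : Filter.Tendsto (fun t => βf (M:ℝ) ‖ξ‖ t) Filter.atTop (nhds 0) :=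
    ((hfam (M:ℝ) hMpos).1.2 ‖ξ‖ (norm_nonneg ξ)).2
  have hv : Filter.Tendsto (fun t => βf (M:ℝ) ‖ξ‖ t + γf (M:ℝ) C) Filter.atTop
      (nhds (γf (M:ℝ) C)) := by
    simpa using hβ0.add_const (γf (M:ℝ) C)
  have hev : ∀ᶠ t in Filter.atTop, ‖X ξ u t‖ ≤ βf (M:ℝ) ‖ξ‖ t + γf (M:ℝ) C := by
    filter_upwards [Filter.eventually_ge_atTop (0:ℝ)] with t ht using hbnd t ht
  have hlim : Filter.liminf (fun t => ‖X ξ u t‖) Filter.atTop ≤ γf (M:ℝ) C := by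
    have hveq : Filter.liminf (fun t => βf (M:ℝ) ‖ξ‖ t + γf (M:ℝ) C) Filter.atTop
        = γf (M:ℝ) C := hv.liminf_eq
    rw [← hveq]
    refine Filter.liminf_le_liminf hev ?_ ?_
    · exact Filter.isBoundedUnder_of ⟨0, fun t => norm_nonneg _⟩
    · exact hv.isBoundedUnder_le.isCoboundedUnder_ge
  have hstep : γf (M:ℝ) C ≤ σ (M:ℝ) * σ C := hσγ M hM1 C hC
  have hσM : σ (M:ℝ) ≤ σ (C + 1) :=
    hσm.monotoneOn (Set.mem_Ici.mpr hMpos.le) (Set.mem_Ici.mpr (by linarith)) hMC1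
  calc Filter.liminf (fun t => ‖X ξ u t‖) Filter.atTop
      ≤ σ (M:ℝ) * σ C := le_trans hlim hstep
    _ ≤ σ (C + 1) * σ C := mul_le_mul_of_nonneg_right hσM (hσnn C hC)
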